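/- Let f : ℝ → ℝ be a differentiable function satisfying f'(t) = (1/m) f(t)² + a for all t, where m > 0 and a is a constant. If f is bounded, then a ≤ 0 and f is constant equal to √(-ma) or -√(-ma), or f is strictly monotone. -/

import Mathlib

open Set

/-- Uniqueness: a bounded solution of the Riccati ODE touching an equilibrium is constant. -/
lemma const_of_ode (f : ℝ → ℝ) (hf : Differentiable ℝ f) (m a : ℝ) (hm : 0 < m)
    (hode : ∀ t : ℝ, deriv f t = (1 / m) * (f t) ^ 2 + a) (C : ℝ) (hC : ∀ t : ℝ, |f t| ≤ C)
    (t₀ : ℝ) (h0 : (1 / m) * (f t₀) ^ 2 + a = 0) : ∀ t, f t = f t₀ := by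
  have hC0 : 0 ≤ C := le_trans (abs_nonneg _) (hC 0)
  set v : ℝ → ℝ → ℝ := fun _ x => (1 / m) * x ^ 2 + a with hv_def
  set K : NNReal := Real.toNNReal (2 * C / m) with hK_def
  have hKcoe : (K : ℝ) = 2 * C / m := by
    rw [hK_def, Real.coe_toNNReal]
    positivity
  have hv : ∀ t, LipschitzOnWith K (v t) (Icc (-C) C) := by
    intro t
    rw [lipschitzOnWith_iff_dist_le_mul]
    intro x hx y hy
    rw [Real.dist_eq, Real.dist_eq, hKcoe]
    have h1 : v t x - v t y = (1 / m) * ((x + y) * (x - y)) := by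
      simp only [hv_def]; ring
    rw [h1, abs_mul, abs_mul]
    have hxy : |x + y| ≤ 2 * C := by
      calc |x + y| ≤ |x| + |y| := abs_add_le _ _
        _ ≤ 2 * C := by
          have h1 : |x| ≤ C := abs_le.mpr ⟨hx.1, hx.2⟩
          have h2 : |y| ≤ C := abs_le.mpr ⟨hy.1, hy.2⟩
          linarith
    have h1m : |1 / m| = 1 / m := abs_of_pos (by positivity)
    rw [h1m]
    have h2 : |x + y| * |x - y| ≤ 2 * C * |x - y| :=
      mul_le_mul_of_nonneg_right hxy (abs_nonneg _)
    rw [show (2 * C / m) = (1 / m) * (2 * C) by ring, mul_assoc]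
    exact mul_le_mul_of_nonneg_left h2 (by positivity)
  intro t
  have ht0mem : t₀ ∈ Ioo (min t t₀ - 1) (max t t₀ + 1) :=
    ⟨by have := min_le_right t t₀; linarith, by have := le_max_right t t₀; linarith⟩
  have key := ODE_solution_unique_of_mem_Ioo (v := v) (s := fun _ => Icc (-C) C) (fun s _ => hv s)
    (t₀ := t₀) (a := min t t₀ - 1) (b := max t t₀ + 1)
    (f := f) (g := fun _ => f t₀) ht0mem
    (fun s _ => ⟨by rw [show v s (f s) = deriv f s from (hode s).symm]; exact (hf s).hasDerivAt,
      abs_le.mp (hC s)⟩)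
    (fun s _ => ⟨by
      have : v s (f t₀) = 0 := h0
      rw [this]; exact hasDerivAt_const s (f t₀), abs_le.mp (hC t₀)⟩)
    rfl
  exact key ⟨by have := min_le_left t t₀; linarith, by have := le_max_left t t₀; linarith⟩

/-- If `f : ℝ → ℝ` is differentiable with `f' t = (1/m) f t ^ 2 + a` (`m > 0`) and `f` is
bounded, then `a ≤ 0` and `f` is constantly `√(-m*a)` or `-√(-m*a)`, or `f` is strictly
monotone. -/
theorem stmt1 (f : ℝ → ℝ) (hf : Differentiable ℝ f) (m a : ℝ) (hm : 0 < m)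
    (hode : ∀ t : ℝ, deriv f t = (1 / m) * (f t) ^ 2 + a)
    (hbdd : ∃ C : ℝ, ∀ t : ℝ, |f t| ≤ C) :
    a ≤ 0 ∧
      ((∀ t, f t = Real.sqrt (-(m * a))) ∨ (∀ t, f t = -Real.sqrt (-(m * a))) ∨
        StrictMono f ∨ StrictAnti f) := by
  obtain ⟨C, hC⟩ := hbdd
  have hC0 : 0 ≤ C := le_trans (abs_nonneg _) (hC 0)
  -- a ≤ 0
  have ha : a ≤ 0 := by
    by_contra h
    push_neg at h
    have hd : ∀ t, a ≤ deriv f t := by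
      intro t
      rw [hode]
      have : 0 ≤ (1 / m) * (f t) ^ 2 := by positivity
      linarith
    have hmono : Monotone (fun t => f t - a * t) := by
      apply monotone_of_deriv_nonneg
      · exact hf.sub ((differentiable_id).const_mul a)
      · intro t
        have h1 : HasDerivAt (fun t => f t - a * t) (deriv f t - a * 1) t :=
          (hf t).hasDerivAt.sub ((hasDerivAt_id t).const_mul a)
        rw [h1.deriv]
        have := hd t
        linarith
    have hT : (0:ℝ) ≤ (2 * C + 1) / a := by positivity
    have := hmono hT
    simp only at this
    have hfT := hC ((2 * C + 1) / a)
    have hf0 := hC 0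
    rw [abs_le] at hfT hf0
    have haT : a * ((2 * C + 1) / a) = 2 * C + 1 := by field_simp
    nlinarith [hfT.2, hf0.1]
  refine ⟨ha, ?_⟩
  by_cases hz : ∃ t₀, (1 / m) * (f t₀) ^ 2 + a = 0
  · obtain ⟨t₀, h0⟩ := hz
    have hconst := const_of_ode f hf m a hm hode C hC t₀ h0
    have hsq : (f t₀) ^ 2 = -(m * a) := by
      have hm' : m ≠ 0 := ne_of_gt hm
      field_simp at h0
      linarith
    rcases le_or_gt 0 (f t₀) with hpos | hneg
    · left
      intro t
      rw [hconst t, ← hsq, Real.sqrt_sq hpos]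
    · right; left
      intro t
      rw [hconst t, ← hsq]
      rw [show (f t₀) ^ 2 = (-(f t₀)) ^ 2 by ring, Real.sqrt_sq (by linarith)]
      ring
  · push_neg at hz
    have hcont : Continuous (deriv f) := by
      have hde : deriv f = fun t => (1 / m) * (f t) ^ 2 + a := funext hode
      rw [hde]
      exact (continuous_const.mul (hf.continuous.pow 2)).add continuous_const
    have hne : ∀ t, deriv f t ≠ 0 := by
      intro t h
      exact hz t (by rw [← hode t]; exact h)
    rcases lt_or_gt_of_ne (hne 0) with hneg | hpos
    · right; right; right
      apply strictAnti_of_deriv_neg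
      intro t
      by_contra h
      push_neg at h
      have ht : 0 < deriv f t := lt_of_le_of_ne h (Ne.symm (hne t))
      have : (0:ℝ) ∈ uIcc (deriv f 0) (deriv f t) := by
        rw [mem_uIcc]; left; exact ⟨le_of_lt hneg, le_of_lt ht⟩
      obtain ⟨c, _, hc⟩ := intermediate_value_uIcc (hcont.continuousOn (s := uIcc 0 t)) this
      exact hne c hc
    · right; right; left
      apply strictMono_of_deriv_pos
      intro t
      by_contra h
      push_neg at h
      have ht : deriv f t < 0 := lt_of_le_of_ne h (hne t)
      have : (0:ℝ) ∈ uIcc (deriv f 0) (deriv f t) := by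
        rw [mem_uIcc]; right; exact ⟨le_of_lt ht, le_of_lt hpos⟩
      obtain ⟨c, _, hc⟩ := intermediate_value_uIcc (hcont.continuousOn (s := uIcc 0 t)) this
      exact hne c hc
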